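/- If I is an ideal of Z[X] of additive index at most m (m a positive integer), then the ideal generated by m! and X^{m!+m} − X^m is contained in I. -/
import Mathlib

theorem pow_aux {M : Type*} [Monoid M] [Finite M] {m : ℕ}
    (hcard : Nat.card M ≤ m) (x : M) : x ^ (m.factorial + m) = x ^ m := by
  cases nonempty_fintype M
  have h1 : Fintype.card M < Fintype.card (Fin (m+1)) := by
    rw [← Nat.card_eq_fintype_card]; simpa using Nat.lt_succ_of_le hcard
  obtain ⟨i, j, hne, hij⟩ := Fintype.exists_ne_map_eq_of_card_lt
    (fun i : Fin (m+1) => x ^ (i.val + 1)) h1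
  wlog hlt : i < j generalizing i j
  · exact this j i hne.symm hij.symm (hne.lt_or_gt.resolve_left hlt)
  set a := i.val + 1 with ha
  set d := j.val - i.val with hd
  have hdpos : 0 < d := Nat.sub_pos_of_lt hlt
  have hdle : d ≤ m := by omega
  have hale : a ≤ m := by omega
  have key : x ^ (a + d) = x ^ a := by
    have h2 : j.val + 1 = a + d := by omega
    simpa [h2] using hij.symm
  have step : ∀ k, x ^ (a + k * d) = x ^ a := by
    intro k
    induction k with
    | zero => simp
    | succ k ih =>
      calc x ^ (a + (k+1) * d) = x ^ (a + k * d) * x ^ d := by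
            rw [← pow_add]; ring_nf
        _ = x ^ a * x ^ d := by rw [ih]
        _ = x ^ (a + d) := by rw [← pow_add]
        _ = x ^ a := key
  obtain ⟨k, hk⟩ := Nat.dvd_factorial hdpos hdle
  calc x ^ (m.factorial + m) = x ^ ((a + k * d) + (m - a)) := by
        rw [Nat.mul_comm, ← hk]; congr 1; omega
    _ = x ^ (a + k * d) * x ^ (m - a) := pow_add ..
    _ = x ^ a * x ^ (m - a) := by rw [step]
    _ = x ^ m := by rw [← pow_add]; congr 1; omega

open Polynomial

theorem stmt_10 (m : ℕ) (hm : 0 < m) (I : Ideal (Polynomial ℤ))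
    (hfin : I.toAddSubgroup.index ≠ 0) (hle : I.toAddSubgroup.index ≤ m) :
    Ideal.span ({(m.factorial : Polynomial ℤ),
      X ^ (m.factorial + m) - X ^ m} : Set (Polynomial ℤ)) ≤ I := by
  have hcard : Nat.card (Polynomial ℤ ⧸ I) = I.toAddSubgroup.index := rfl
  have hfinite : Finite (Polynomial ℤ ⧸ I) :=
    Nat.finite_of_card_ne_zero (by rw [hcard]; exact hfin)
  have h1 : ((m.factorial : Polynomial ℤ) : Polynomial ℤ) ∈ I := by
    rw [← Ideal.Quotient.eq_zero_iff_mem]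
    obtain ⟨k, hk⟩ := Nat.dvd_factorial (Nat.pos_of_ne_zero hfin) hle
    have := Ideal.Quotient.index_eq_zero I
    rw [hk]
    push_cast
    rw [map_mul, map_natCast, this, zero_mul]
  have h2 : X ^ (m.factorial + m) - X ^ m ∈ I := by
    rw [← Ideal.Quotient.eq_zero_iff_mem]
    have := pow_aux (M := Polynomial ℤ ⧸ I) (m := m) (hcard ▸ hle)
      (Ideal.Quotient.mk I X)
    rw [map_sub, map_pow, map_pow, this, sub_self]
  rw [Ideal.span_le]
  rintro p (rfl | rfl)
  · exact h1
  · exact h2
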